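/- Let S = ⟨a_0,…,a_g⟩ be a numerical semigroup that is free for the arrangement (a_0,…,a_g). Then the conductor of S is c(S) = Σ_{i=1}^{g} (n_i − 1)·a_i − a_0 + 1. -/

import Mathlib

/-- `eSeq a i = gcd(a 0, …, a i)`. -/
def eSeq (a : ℕ → ℕ) : ℕ → ℕ
  | 0 => a 0
  | i + 1 => Nat.gcd (eSeq a i) (a (i + 1))

/-- `nSeq a i = e_{i-1} / e_i` (intended for `1 ≤ i`). -/
def nSeq (a : ℕ → ℕ) (i : ℕ) : ℕ := eSeq a (i - 1) / eSeq a i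

/-- `gen a i = ⟨a 0, …, a i⟩`, the set of all ℕ-linear combinations. -/
def gen (a : ℕ → ℕ) (i : ℕ) : Set ℕ :=
  {s | ∃ c : ℕ → ℕ, s = ∑ j ∈ Finset.range (i + 1), c j * a j}

/-- The semigroup `S = ⟨a 0, …, a g⟩` is free for the arrangement `(a 0, …, a g)`. -/
def IsFreeArr (a : ℕ → ℕ) (g : ℕ) : Prop :=
  eSeq a g = 1 ∧ ∀ i, 1 ≤ i → i ≤ g → nSeq a i * a i ∈ gen a (i - 1)

/-- The conductor of a set `T ⊆ ℕ`: the least `c` with `c + ℕ ⊆ T`. -/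
noncomputable def conductorOf (T : Set ℕ) : ℕ := sInf {c : ℕ | ∀ m, c ≤ m → m ∈ T}

section Aux

variable (a : ℕ → ℕ)

lemma eSeq_pos (h : 0 < a 0) : ∀ i, 0 < eSeq a i
  | 0 => h
  | i + 1 => Nat.gcd_pos_of_pos_left _ (eSeq_pos h i)

lemma eSeq_succ_dvd (i : ℕ) : eSeq a (i + 1) ∣ eSeq a i := Nat.gcd_dvd_left _ _

lemma eSeq_dvd_a : ∀ i, ∀ j ≤ i, eSeq a i ∣ a j
  | 0, j, hj => by
    have : j = 0 := Nat.le_zero.mp hj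
    subst this; exact dvd_refl _
  | i + 1, j, hj => by
    rcases Nat.lt_or_ge j (i + 1) with h | h
    · exact (eSeq_succ_dvd a i).trans (eSeq_dvd_a i j (Nat.lt_succ_iff.mp h))
    · have : j = i + 1 := le_antisymm hj h
      subst this; exact Nat.gcd_dvd_right _ _

lemma nSeq_mul (i : ℕ) : nSeq a (i + 1) * eSeq a (i + 1) = eSeq a i := by
  have h : (i + 1) - 1 = i := rfl
  rw [nSeq, h]
  exact Nat.div_mul_cancel (eSeq_succ_dvd a i)

lemma nSeq_pos (h : 0 < a 0) (i : ℕ) : 0 < nSeq a (i + 1) := by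
  have h1 := eSeq_pos a h i
  have h3 := nSeq_mul a i
  by_contra hn
  simp only [Nat.not_lt, Nat.le_zero] at hn
  rw [hn] at h3; simp at h3; omega

lemma gen_add {i s t : ℕ} (hs : s ∈ gen a i) (ht : t ∈ gen a i) : s + t ∈ gen a i := by
  obtain ⟨c, rfl⟩ := hs
  obtain ⟨d, rfl⟩ := ht
  refine ⟨fun j => c j + d j, ?_⟩
  rw [← Finset.sum_add_distrib]
  exact Finset.sum_congr rfl fun j _ => by simp [add_mul]

lemma gen_smul {i s : ℕ} (n : ℕ) (hs : s ∈ gen a i) : n * s ∈ gen a i := by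
  obtain ⟨c, rfl⟩ := hs
  refine ⟨fun j => n * c j, ?_⟩
  rw [Finset.mul_sum]
  exact Finset.sum_congr rfl fun j _ => by simp [mul_assoc]

lemma gen_mono {i s : ℕ} (hs : s ∈ gen a i) : s ∈ gen a (i + 1) := by
  obtain ⟨c, rfl⟩ := hs
  refine ⟨fun j => if j = i + 1 then 0 else c j, ?_⟩
  have h1 : ∑ j ∈ Finset.range (i + 1 + 1), (fun j => if j = i + 1 then 0 else c j) j * a j
      = (∑ j ∈ Finset.range (i + 1), (fun j => if j = i + 1 then 0 else c j) j * a j)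
        + (if i + 1 = i + 1 then 0 else c (i + 1)) * a (i + 1) := Finset.sum_range_succ _ _
  rw [h1, if_pos rfl, zero_mul, add_zero]
  refine (Finset.sum_congr rfl fun j hj => ?_).symm
  have hne : j ≠ i + 1 := by have := Finset.mem_range.mp hj; omega
  simp [hne]

lemma gen_mul_a {i j : ℕ} (hj : j ≤ i) (n : ℕ) : n * a j ∈ gen a i := by
  refine ⟨fun k => if k = j then n else 0, ?_⟩
  rw [Finset.sum_eq_single j]
  · simp
  · intro b _ hb; simp [hb]
  · intro h; exact absurd (Finset.mem_range.mpr (by omega)) h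

lemma eSeq_dvd_gen {i s : ℕ} (hs : s ∈ gen a i) : eSeq a i ∣ s := by
  obtain ⟨c, rfl⟩ := hs
  exact Finset.dvd_sum fun j hj =>
    Dvd.dvd.mul_left (eSeq_dvd_a a i j (Nat.lt_succ_iff.mp (Finset.mem_range.mp hj))) (c j)

lemma sum_lb (g : ℕ) (hpos : ∀ i, i ≤ g → 0 < a i) :
    ∀ k, k ≤ g →
      (a 0 : ℤ) - eSeq a k ≤ ∑ i ∈ Finset.Icc 1 k, ((nSeq a i : ℤ) - 1) * a i := by
  have h0 : 0 < a 0 := hpos 0 (Nat.zero_le g)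
  intro k
  induction k with
  | zero => intro _; simp [eSeq]
  | succ k ih =>
    intro hk
    rw [Finset.sum_Icc_succ_top (by omega : 1 ≤ k + 1)]
    have h1 := ih (by omega)
    have hE : (nSeq a (k + 1) : ℤ) * eSeq a (k + 1) = eSeq a k := by
      exact_mod_cast nSeq_mul a k
    have ha : (eSeq a (k + 1) : ℤ) ≤ a (k + 1) := by
      exact_mod_cast Nat.le_of_dvd (hpos _ hk) (eSeq_dvd_a a (k + 1) (k + 1) le_rfl)
    have hn : (1 : ℤ) ≤ nSeq a (k + 1) := by exact_mod_cast nSeq_pos a h0 k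
    have hE' : (0 : ℤ) ≤ eSeq a (k + 1) := by positivity
    nlinarith [mul_nonneg (sub_nonneg.mpr hn) (sub_nonneg.mpr ha)]

lemma exists_residue (N b m' : ℕ) (hN : 0 < N) (hco : Nat.Coprime b N) :
    ∃ c, c < N ∧ c * b ≡ m' [MOD N] := by
  rcases Nat.lt_or_ge 1 N with h1 | h1
  · obtain ⟨inv, -, hinv⟩ := Nat.exists_mul_mod_eq_one_of_coprime hco h1
    refine ⟨(m' * inv) % N, Nat.mod_lt _ hN, ?_⟩
    have h2 : b * inv ≡ 1 [MOD N] := by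
      unfold Nat.ModEq
      rw [hinv, Nat.mod_eq_of_lt h1]
    calc (m' * inv % N) * b ≡ (m' * inv) * b [MOD N] :=
          (Nat.mod_modEq _ _).mul_right b
      _ = m' * (b * inv) := by ring
      _ ≡ m' * 1 [MOD N] := h2.mul_left m'
      _ = m' := by ring
  · have : N = 1 := by omega
    subst this
    exact ⟨0, by omega, by simp [Nat.ModEq, Nat.mod_one]⟩

/-- Key coprimality: `a (k+1) / e_{k+1}` is coprime to `n_{k+1}`. -/
lemma coprime_b_N (h0 : 0 < a 0) (k : ℕ) :
    Nat.Coprime (a (k + 1) / eSeq a (k + 1)) (nSeq a (k + 1)) := by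
  have hE'pos : 0 < eSeq a (k + 1) := eSeq_pos a h0 (k + 1)
  have hgcd : Nat.gcd (eSeq a k) (a (k + 1)) = eSeq a (k + 1) := rfl
  have h := Nat.coprime_div_gcd_div_gcd (m := eSeq a k) (n := a (k + 1))
    (by rw [hgcd]; exact hE'pos)
  rw [hgcd] at h
  have hN' : eSeq a k / eSeq a (k + 1) = nSeq a (k + 1) := rfl
  rw [hN'] at h
  exact h.symm

lemma mem_gen_of_big (g : ℕ) (hpos : ∀ i, i ≤ g → 0 < a i) :
    ∀ k, k ≤ g → ∀ m : ℕ, eSeq a k ∣ m →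
      (∑ i ∈ Finset.Icc 1 k, ((nSeq a i : ℤ) - 1) * a i) - a 0 < m → m ∈ gen a k := by
  have h0 : 0 < a 0 := hpos 0 (Nat.zero_le g)
  intro k
  induction k with
  | zero =>
    intro _ m hdvd _
    refine ⟨fun _ => m / a 0, ?_⟩
    simp only [Finset.sum_range_one]
    exact (Nat.div_mul_cancel hdvd).symm
  | succ k ih =>
    intro hk m hdvd hbig
    have hEpos : 0 < eSeq a k := eSeq_pos a h0 k
    have hE'pos : 0 < eSeq a (k + 1) := eSeq_pos a h0 (k + 1)
    have hNpos : 0 < nSeq a (k + 1) := nSeq_pos a h0 k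
    have hNE : nSeq a (k + 1) * eSeq a (k + 1) = eSeq a k := nSeq_mul a k
    have hE'a : eSeq a (k + 1) ∣ a (k + 1) := eSeq_dvd_a a (k + 1) (k + 1) le_rfl
    have hb : eSeq a (k + 1) * (a (k + 1) / eSeq a (k + 1)) = a (k + 1) :=
      Nat.mul_div_cancel' hE'a
    have hm' : eSeq a (k + 1) * (m / eSeq a (k + 1)) = m := Nat.mul_div_cancel' hdvd
    obtain ⟨c, hcN, hcmod⟩ := exists_residue (nSeq a (k + 1)) (a (k + 1) / eSeq a (k + 1))
      (m / eSeq a (k + 1)) hNpos (coprime_b_N a h0 k)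
    have hNdvd : (nSeq a (k + 1) : ℤ) ∣
        ((m / eSeq a (k + 1) : ℕ) : ℤ) - c * ((a (k + 1) / eSeq a (k + 1) : ℕ) : ℤ) := by
      have h := hcmod.dvd
      push_cast at h ⊢
      exact h
    obtain ⟨q, hq⟩ := hNdvd
    have hEdvdt : (eSeq a k : ℤ) ∣ (m : ℤ) - c * a (k + 1) := by
      refine ⟨q, ?_⟩
      have e1 : (m : ℤ) = (eSeq a (k + 1) : ℤ) * ((m / eSeq a (k + 1) : ℕ) : ℤ) := by
        exact_mod_cast hm'.symm
      have e2 : (a (k + 1) : ℤ) =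
          (eSeq a (k + 1) : ℤ) * ((a (k + 1) / eSeq a (k + 1) : ℕ) : ℤ) := by
        exact_mod_cast hb.symm
      have e3 : (eSeq a k : ℤ) = (nSeq a (k + 1) : ℤ) * (eSeq a (k + 1) : ℤ) := by
        exact_mod_cast hNE.symm
      rw [e1, e2, e3]
      linear_combination (eSeq a (k + 1) : ℤ) * hq
    -- lower bound on t := m - c * a (k+1)
    have hsum : (∑ i ∈ Finset.Icc 1 (k + 1), ((nSeq a i : ℤ) - 1) * a i)
        = (∑ i ∈ Finset.Icc 1 k, ((nSeq a i : ℤ) - 1) * a i)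
          + ((nSeq a (k + 1) : ℤ) - 1) * a (k + 1) :=
      Finset.sum_Icc_succ_top (by omega) _
    have hca : (c : ℤ) * a (k + 1) ≤ ((nSeq a (k + 1) : ℤ) - 1) * a (k + 1) := by
      have hc' : (c : ℤ) ≤ (nSeq a (k + 1) : ℤ) - 1 := by omega
      exact mul_le_mul_of_nonneg_right hc' (by positivity)
    have ht_big : (∑ i ∈ Finset.Icc 1 k, ((nSeq a i : ℤ) - 1) * a i) - a 0
        < (m : ℤ) - c * a (k + 1) := by
      rw [hsum] at hbig
      linarith
    have ht_nonneg : (0 : ℤ) ≤ (m : ℤ) - c * a (k + 1) := by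
      have hlb := sum_lb a g hpos k (by omega)
      by_contra hneg
      push_neg at hneg
      have h1 : (eSeq a k : ℤ) ∣ -((m : ℤ) - c * a (k + 1)) := hEdvdt.neg_right
      have h2 : (eSeq a k : ℤ) ≤ -((m : ℤ) - c * a (k + 1)) :=
        Int.le_of_dvd (by linarith) h1
      have h3 : (0 : ℤ) < eSeq a k := by exact_mod_cast hEpos
      linarith
    have hle : c * a (k + 1) ≤ m := by exact_mod_cast (by linarith : (c : ℤ) * a (k + 1) ≤ m)
    have hcast : ((m - c * a (k + 1) : ℕ) : ℤ) = (m : ℤ) - c * a (k + 1) := by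
      rw [Nat.cast_sub hle]
      push_cast
      ring
    have hm2 : m - c * a (k + 1) ∈ gen a k := by
      apply ih (by omega)
      · have : (eSeq a k : ℤ) ∣ ((m - c * a (k + 1) : ℕ) : ℤ) := by rw [hcast]; exact hEdvdt
        exact_mod_cast this
      · rw [hcast]; exact ht_big
    have : m = (m - c * a (k + 1)) + c * a (k + 1) := (Nat.sub_add_cancel hle).symm
    rw [this]
    exact gen_add a (gen_mono a hm2) (gen_mul_a a le_rfl c)

lemma not_frobenius_mem (g : ℕ) (hpos : ∀ i, i ≤ g → 0 < a i)
    (hfree : ∀ i, 1 ≤ i → i ≤ g → nSeq a i * a i ∈ gen a (i - 1)) :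
    ∀ k, k ≤ g → ∀ m ∈ gen a k,
      (m : ℤ) ≠ (∑ i ∈ Finset.Icc 1 k, ((nSeq a i : ℤ) - 1) * a i) - a 0 := by
  have h0 : 0 < a 0 := hpos 0 (Nat.zero_le g)
  intro k
  induction k with
  | zero =>
    intro _ m _ h
    rw [Finset.Icc_eq_empty (by omega), Finset.sum_empty] at h
    omega
  | succ k ih =>
    intro hk m hm heq
    obtain ⟨co, hco⟩ := hm
    rw [Finset.sum_range_succ] at hco
    set s : ℕ := ∑ j ∈ Finset.range (k + 1), co j * a j with hsdef
    have hsmem : s ∈ gen a k := ⟨co, rfl⟩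
    set d : ℕ := co (k + 1) with hddef
    have hEpos : 0 < eSeq a k := eSeq_pos a h0 k
    have hE'pos : 0 < eSeq a (k + 1) := eSeq_pos a h0 (k + 1)
    have hNpos : 0 < nSeq a (k + 1) := nSeq_pos a h0 k
    have hNE : nSeq a (k + 1) * eSeq a (k + 1) = eSeq a k := nSeq_mul a k
    have hE'a : eSeq a (k + 1) ∣ a (k + 1) := eSeq_dvd_a a (k + 1) (k + 1) le_rfl
    have hsum : (∑ i ∈ Finset.Icc 1 (k + 1), ((nSeq a i : ℤ) - 1) * a i)
        = (∑ i ∈ Finset.Icc 1 k, ((nSeq a i : ℤ) - 1) * a i)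
          + ((nSeq a (k + 1) : ℤ) - 1) * a (k + 1) :=
      Finset.sum_Icc_succ_top (by omega) _
    -- E := eSeq a k divides s and divides the sum over Icc 1 k and a 0
    have hEs : (eSeq a k : ℤ) ∣ (s : ℤ) := Int.natCast_dvd_natCast.mpr (eSeq_dvd_gen a hsmem)
    have hEsum : (eSeq a k : ℤ) ∣ (∑ i ∈ Finset.Icc 1 k, ((nSeq a i : ℤ) - 1) * a i) - a 0 := by
      apply dvd_sub
      · apply Finset.dvd_sum
        intro i hi
        have hi' : i ≤ k := (Finset.mem_Icc.mp hi).2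
        exact Dvd.dvd.mul_left (Int.natCast_dvd_natCast.mpr (eSeq_dvd_a a k i hi')) _
      · exact Int.natCast_dvd_natCast.mpr (eSeq_dvd_a a k 0 (Nat.zero_le k))
    -- m = s + d * a(k+1) and m = Σ_k + (N-1) a(k+1) - a0
    have hmeq : (m : ℤ) = (s : ℤ) + d * a (k + 1) := by exact_mod_cast hco
    have hEdiff : (eSeq a k : ℤ) ∣ ((d : ℤ) - ((nSeq a (k + 1) : ℤ) - 1)) * a (k + 1) := by
      have h1 : (eSeq a k : ℤ) ∣ (m : ℤ) - d * a (k + 1) := by rw [hmeq]; simpa using hEs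
      have h2 : (eSeq a k : ℤ) ∣ (m : ℤ) - ((nSeq a (k + 1) : ℤ) - 1) * a (k + 1) := by
        rw [heq, hsum]
        have : (∑ i ∈ Finset.Icc 1 k, ((nSeq a i : ℤ) - 1) * a i)
            + ((nSeq a (k + 1) : ℤ) - 1) * a (k + 1) - a 0
            - ((nSeq a (k + 1) : ℤ) - 1) * a (k + 1)
            = (∑ i ∈ Finset.Icc 1 k, ((nSeq a i : ℤ) - 1) * a i) - a 0 := by ring
        rw [this]
        exact hEsum
      have := dvd_sub h2 h1
      have e : (m : ℤ) - ((nSeq a (k + 1) : ℤ) - 1) * a (k + 1) - ((m : ℤ) - d * a (k + 1))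
          = ((d : ℤ) - ((nSeq a (k + 1) : ℤ) - 1)) * a (k + 1) := by ring
      rwa [e] at this
    -- cancel E' and use coprimality to get N ∣ d - (N - 1)
    have hNdvd : (nSeq a (k + 1) : ℤ) ∣ (d : ℤ) - ((nSeq a (k + 1) : ℤ) - 1) := by
      have hb : (a (k + 1) : ℤ) =
          (eSeq a (k + 1) : ℤ) * ((a (k + 1) / eSeq a (k + 1) : ℕ) : ℤ) := by
        exact_mod_cast (Nat.mul_div_cancel' hE'a).symm
      have hE : (eSeq a k : ℤ) = (nSeq a (k + 1) : ℤ) * (eSeq a (k + 1) : ℤ) := by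
        exact_mod_cast hNE.symm
      rw [hE, hb] at hEdiff
      have hE'ne : (eSeq a (k + 1) : ℤ) ≠ 0 := by exact_mod_cast hE'pos.ne'
      have hcancel : (nSeq a (k + 1) : ℤ) ∣
          ((d : ℤ) - ((nSeq a (k + 1) : ℤ) - 1)) * ((a (k + 1) / eSeq a (k + 1) : ℕ) : ℤ) := by
        obtain ⟨q, hq⟩ := hEdiff
        refine ⟨q, ?_⟩
        refine mul_left_cancel₀ hE'ne ?_
        calc (eSeq a (k + 1) : ℤ) * (((d : ℤ) - ((nSeq a (k + 1) : ℤ) - 1))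
              * ((a (k + 1) / eSeq a (k + 1) : ℕ) : ℤ))
            = ((d : ℤ) - ((nSeq a (k + 1) : ℤ) - 1))
              * ((eSeq a (k + 1) : ℤ) * ((a (k + 1) / eSeq a (k + 1) : ℕ) : ℤ)) := by ring
          _ = (nSeq a (k + 1) : ℤ) * (eSeq a (k + 1) : ℤ) * q := hq
          _ = (eSeq a (k + 1) : ℤ) * ((nSeq a (k + 1) : ℤ) * q) := by ring
      have hcop : IsCoprime ((nSeq a (k + 1) : ℤ)) ((a (k + 1) / eSeq a (k + 1) : ℕ) : ℤ) :=
        Nat.isCoprime_iff_coprime.mpr ((coprime_b_N a h0 k).symm)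
      exact hcop.dvd_of_dvd_mul_right hcancel
    obtain ⟨q, hq⟩ := hNdvd
    have hq0 : 0 ≤ q := by
      by_contra hq0
      push_neg at hq0
      have h1 : (1 : ℤ) ≤ nSeq a (k + 1) := by exact_mod_cast hNpos
      have h2 : (0 : ℤ) ≤ d := Int.natCast_nonneg d
      nlinarith
    -- s' := s + q.toNat * (N * a (k+1)) ∈ gen a k and equals Frobenius for k
    have hfreemem : nSeq a (k + 1) * a (k + 1) ∈ gen a k := by
      have := hfree (k + 1) (by omega) hk
      simpa using this
    have hs'mem : s + q.toNat * (nSeq a (k + 1) * a (k + 1)) ∈ gen a k :=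
      gen_add a hsmem (gen_smul a q.toNat hfreemem)
    apply ih (by omega) _ hs'mem
    have hqt : ((q.toNat : ℤ)) = q := Int.toNat_of_nonneg hq0
    push_cast [hqt]
    rw [heq, hsum] at hmeq
    have hd : (d : ℤ) = ((nSeq a (k + 1) : ℤ) - 1) + (nSeq a (k + 1) : ℤ) * q := by linarith [hq]
    linear_combination -hmeq - (a (k + 1) : ℤ) * hd

end Aux

theorem stmt_8 (g : ℕ) (a : ℕ → ℕ) (hpos : ∀ i, i ≤ g → 0 < a i)
    (hfree : IsFreeArr a g) :
    (conductorOf (gen a g) : ℤ) =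
      (∑ i ∈ Finset.Icc 1 g, ((nSeq a i : ℤ) - 1) * (a i : ℤ)) - (a 0 : ℤ) + 1 := by
  obtain ⟨heg, hfree'⟩ := hfree
  have h0 : 0 < a 0 := hpos 0 (Nat.zero_le g)
  set Sz : ℤ := ∑ i ∈ Finset.Icc 1 g, ((nSeq a i : ℤ) - 1) * (a i : ℤ) with hSzdef
  have hlb : (a 0 : ℤ) - 1 ≤ Sz := by
    have := sum_lb a g hpos g le_rfl
    rw [heg] at this
    simpa using this
  set C : ℕ := (Sz - a 0 + 1).toNat with hCdef
  have hCcast : (C : ℤ) = Sz - a 0 + 1 := Int.toNat_of_nonneg (by linarith)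
  have hmem : ∀ m : ℕ, C ≤ m → m ∈ gen a g := by
    intro m hm
    apply mem_gen_of_big a g hpos g le_rfl m (by rw [heg]; exact one_dvd m)
    have : (C : ℤ) ≤ m := by exact_mod_cast hm
    linarith
  have hne : Set.Nonempty {c : ℕ | ∀ m, c ≤ m → m ∈ gen a g} := ⟨C, hmem⟩
  have h1 : conductorOf (gen a g) ≤ C := Nat.sInf_le hmem
  have h2 : C ≤ conductorOf (gen a g) := by
    by_contra h
    push_neg at h
    have hCpos : 0 < C := by omega
    have hinfmem := Nat.sInf_mem hne
    have hF : (C - 1) ∈ gen a g := hinfmem (C - 1) (by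
      change conductorOf (gen a g) ≤ C - 1
      omega)
    have := not_frobenius_mem a g hpos hfree' g le_rfl (C - 1) hF
    apply this
    have : ((C - 1 : ℕ) : ℤ) = (C : ℤ) - 1 := by omega
    rw [this, hCcast]
    ring
  have : conductorOf (gen a g) = C := le_antisymm h1 h2
  rw [this, hCcast]
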